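/- Let X be an ideal of L⁰(Ω, Σ, ℙ) containing the constants and let f ∈ X with f ≥ 0. Then the option space O_f = span{1, (f − k)⁺ : k ∈ ℝ} is a sublattice of X, and coincides with span{f + 1, f, (f − k(f+1))⁺ : k ∈ ℝ}. -/

import Mathlib

open MeasureTheory Filter

universe u

variable {Ω : Type u}

/-- An ideal (solid subspace) of `L⁰`. -/
def IsIdealL0 {m0 : MeasurableSpace Ω} {μ : Measure Ω} (X : Submodule ℝ (Ω →ₘ[μ] ℝ)) : Prop :=
  ∀ x y : Ω →ₘ[μ] ℝ, |x| ≤ |y| → y ∈ X → x ∈ X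

/-- Order convergence of a net `y` to `x` within the subspace `X` of `L⁰`: there is a net
`z` in `X`, antitone, with infimum `0` relative to `X`, eventually dominating `|y a - x|`. -/
def OrderConvNetIn {m0 : MeasurableSpace Ω} {μ : Measure Ω} (X : Submodule ℝ (Ω →ₘ[μ] ℝ))
    {ι : Type*} [Preorder ι] (y : ι → (Ω →ₘ[μ] ℝ)) (x : Ω →ₘ[μ] ℝ) : Prop :=
  ∃ z : ι → (Ω →ₘ[μ] ℝ), (∀ a, z a ∈ X) ∧ Antitone z ∧ (∀ a, 0 ≤ z a) ∧
    (∀ h ∈ X, (∀ a, h ≤ z a) → h ≤ 0) ∧ ∀ᶠ a in atTop, |y a - x| ≤ z a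

/-- A subset `Y` of `X ⊆ L⁰` is order closed in `X` if it contains the limit of any net of
its elements order-converging (within `X`) to an element of `X`. -/
def OrderClosedIn {m0 : MeasurableSpace Ω} {μ : Measure Ω} (X : Submodule ℝ (Ω →ₘ[μ] ℝ))
    (Y : Set (Ω →ₘ[μ] ℝ)) : Prop :=
  ∀ (ι : Type u) (_ : Preorder ι) (_ : IsDirected ι (· ≤ ·)) (_ : Nonempty ι)
    (y : ι → (Ω →ₘ[μ] ℝ)) (x : Ω →ₘ[μ] ℝ),
    (∀ a, y a ∈ Y) → x ∈ X → OrderConvNetIn X y x → x ∈ Y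

/-- The option space `O_f = span{1, (f-k)⁺ : k ∈ ℝ}` of a claim `f ∈ L⁰`. -/
def optionSpace {m0 : MeasurableSpace Ω} {μ : Measure Ω} (f : Ω →ₘ[μ] ℝ) :
    Submodule ℝ (Ω →ₘ[μ] ℝ) :=
  Submodule.span ℝ ({1} ∪ {g | ∃ k : ℝ, g = (f - k • (1 : Ω →ₘ[μ] ℝ)) ⊔ 0})

noncomputable section OptionSpaceAux

/-- ramp function `(x - k)⁺`. -/
def ramp (k : ℝ) : ℝ → ℝ := fun x => max (x - k) 0

/-- span of `1` and ramp functions inside `ℝ → ℝ`. -/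
def PLspan : Submodule ℝ (ℝ → ℝ) :=
  Submodule.span ℝ ({fun _ => (1 : ℝ)} ∪ {g | ∃ k : ℝ, g = ramp k})

lemma ramp_mem (k : ℝ) : ramp k ∈ PLspan :=
  Submodule.subset_span (Or.inr ⟨k, rfl⟩)

lemma one_mem_PLspan : (fun _ => (1 : ℝ)) ∈ PLspan :=
  Submodule.subset_span (Or.inl rfl)

lemma PLspan_continuous {φ : ℝ → ℝ} (h : φ ∈ PLspan) : Continuous φ := by
  induction h using Submodule.span_induction with
  | mem x hx =>
    rcases hx with hx | ⟨k, rfl⟩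
    · rw [Set.mem_singleton_iff] at hx; subst hx; exact continuous_const
    · exact (continuous_id.sub continuous_const).max continuous_const
  | zero => exact continuous_const
  | add x y hx hy ihx ihy => exact ihx.add ihy
  | smul a x hx ihx => exact ihx.const_smul a

/-- hinge correction. -/
def Hf (v s k : ℝ) : ℝ → ℝ :=
  if 0 ≤ s then s • ramp (max k (k - v / s))
  else s • ramp k - s • ramp (max k (k - v / s))

lemma Hf_mem (v s k : ℝ) : Hf v s k ∈ PLspan := by
  unfold Hf
  split
  · exact Submodule.smul_mem _ _ (ramp_mem _)
  · exact Submodule.sub_mem _ (Submodule.smul_mem _ _ (ramp_mem _))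
      (Submodule.smul_mem _ _ (ramp_mem _))

lemma ramp_of_le {k x : ℝ} (h : x ≤ k) : ramp k x = 0 := by
  simp [ramp, max_eq_right, sub_nonpos.2 h]

lemma ramp_of_ge {k x : ℝ} (h : k ≤ x) : ramp k x = x - k := by
  simp [ramp, max_eq_left, sub_nonneg.2 h]

lemma Hf_of_le {v s k x : ℝ} (h : x ≤ k) : Hf v s k x = 0 := by
  unfold Hf
  have h1 : x ≤ max k (k - v / s) := le_trans h (le_max_left _ _)
  split <;>
  simp [ramp_of_le h, ramp_of_le h1]

lemma Hf_eq {v s k x : ℝ} (h : k ≤ x) :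
    max (v + s * (x - k)) 0 = max v 0 + Hf v s k x := by
  have hsimp : ∀ (a : ℝ) (g : ℝ → ℝ) (y : ℝ), (a • g) y = a * g y := fun _ _ _ => rfl
  have hsub : ∀ (g h : ℝ → ℝ) (y : ℝ), (g - h) y = g y - h y := fun _ _ _ => rfl
  rcases le_or_gt 0 s with hs | hs
  · rcases eq_or_lt_of_le hs with rfl | hs
    · simp [Hf, ramp]
    · have hs0 : s ≠ 0 := hs.ne'
      rcases le_or_gt 0 v with hv | hv
      · have hr : max k (k - v / s) = k := by
          apply max_eq_left; nlinarith [div_nonneg hv hs.le]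
        rw [Hf, if_pos hs.le, hr, hsimp]
        rw [ramp_of_ge h]
        have h1 : 0 ≤ v + s * (x - k) := by nlinarith
        rw [max_eq_left h1, max_eq_left hv]
      · set r := k - v / s with hrdef
        have hsr : s * (r - k) = -v := by
          rw [hrdef]; field_simp; ring
        have hkr : k ≤ r := by nlinarith
        have hr : max k (k - v / s) = r := max_eq_right hkr
        rw [Hf, if_pos hs.le, hr, hsimp, max_eq_right hv.le]
        rcases le_or_gt x r with hxr | hxr
        · rw [ramp_of_le hxr]
          have h1 : v + s * (x - k) ≤ 0 := by nlinarith
          rw [max_eq_right h1]; ring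
        · rw [ramp_of_ge hxr.le]
          have h2 : v + s * (x - k) = s * (x - r) := by nlinarith
          have h1 : 0 ≤ v + s * (x - k) := by rw [h2]; nlinarith
          rw [max_eq_left h1]; linarith
  · have hs0 : s ≠ 0 := hs.ne
    rcases le_or_gt v 0 with hv | hv
    · have hr : max k (k - v / s) = k := by
        apply max_eq_left
        have : 0 ≤ v / s := div_nonneg_of_nonpos hv hs.le
        linarith
      have h1 : v + s * (x - k) ≤ 0 := by nlinarith
      rw [Hf, if_neg (not_le.2 hs), hr, max_eq_right h1, max_eq_right hv]
      simp
    · set r := k - v / s with hrdef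
      have hsr : s * (r - k) = -v := by
        rw [hrdef]; field_simp; ring
      have hkr : k ≤ r := by nlinarith
      have hr : max k (k - v / s) = r := max_eq_right hkr
      rw [Hf, if_neg (not_le.2 hs), hr, max_eq_left hv.le, hsub, hsimp, hsimp,
        ramp_of_ge h]
      rcases le_or_gt x r with hxr | hxr
      · rw [ramp_of_le hxr]
        have h1 : 0 ≤ v + s * (x - k) := by nlinarith
        rw [max_eq_left h1]; ring
      · rw [ramp_of_ge hxr.le]
        have h2 : v + s * (x - k) = s * (x - r) := by nlinarith
        have h1 : v + s * (x - k) ≤ 0 := by rw [h2]; nlinarith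
        rw [max_eq_right h1]; linarith


def Fc (c : ℝ) (l : List (ℝ × ℝ)) : ℝ → ℝ :=
  fun x => c + (l.map fun p => p.1 * ramp p.2 x).sum

lemma Fc_cons (c : ℝ) (p : ℝ × ℝ) (t : List (ℝ × ℝ)) (x : ℝ) :
    Fc c (p :: t) x = Fc c t x + p.1 * ramp p.2 x := by
  simp [Fc]; ring

lemma Fc_mem (c : ℝ) (l : List (ℝ × ℝ)) : Fc c l ∈ PLspan := by
  induction l with
  | nil =>
    have : Fc c [] = c • fun _ => (1 : ℝ) := funext fun x => by
      show c + _ = c * 1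
      simp
    rw [this]; exact Submodule.smul_mem _ _ one_mem_PLspan
  | cons p t ih =>
    have : Fc c (p :: t) = Fc c t + p.1 • ramp p.2 := funext fun x => by
      rw [Fc_cons]; rfl
    rw [this]
    exact Submodule.add_mem _ ih (Submodule.smul_mem _ _ (ramp_mem _))

lemma Fc_affine (c : ℝ) (t : List (ℝ × ℝ)) (k : ℝ) (ht : ∀ p ∈ t, p.2 ≤ k)
    {x : ℝ} (hx : k ≤ x) :
    Fc c t x = Fc c t k + (t.map Prod.fst).sum * (x - k) := by
  induction t with
  | nil => simp [Fc]
  | cons p t ih =>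
    have hp : p.2 ≤ k := ht p (List.mem_cons_self)
    have ih' := ih fun q hq => ht q (List.mem_cons_of_mem _ hq)
    rw [Fc_cons, Fc_cons, ramp_of_ge (le_trans hp hx), ramp_of_ge hp,
      List.map_cons, List.sum_cons]
    linear_combination ih'

lemma posPart_Fc_mem : ∀ l : List (ℝ × ℝ), l.Pairwise (fun p q => q.2 ≤ p.2) →
    ∀ c : ℝ, (fun x => max (Fc c l x) 0) ∈ PLspan := by
  intro l
  induction l with
  | nil =>
    intro _ c
    have : (fun x => max (Fc c [] x) 0) = (max c 0) • fun _ => (1 : ℝ) :=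
      funext fun x => by
        show max (c + _) 0 = max c 0 * 1
        simp [Fc]
    rw [this]; exact Submodule.smul_mem _ _ one_mem_PLspan
  | cons p t ih =>
    intro hl c
    rw [List.pairwise_cons] at hl
    obtain ⟨hhead, htail⟩ := hl
    set k := p.2 with hk
    set v := Fc c t k with hv
    set s' := (t.map Prod.fst).sum with hs'
    have key : (fun x => max (Fc c (p :: t) x) 0)
        = ((fun x => max (Fc c t x) 0) + Hf v (s' + p.1) k) - Hf v s' k := by
      funext x
      show max (Fc c (p :: t) x) 0 = (max (Fc c t x) 0 + Hf v (s' + p.1) k x) - Hf v s' k x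
      rcases le_total x k with hx | hx
      · rw [Fc_cons, ramp_of_le hx, Hf_of_le hx, Hf_of_le hx]
        simp
      · have h1 : Fc c t x = v + s' * (x - k) := Fc_affine c t k hhead hx
        have h2 : Fc c (p :: t) x = v + (s' + p.1) * (x - k) := by
          rw [Fc_cons, h1, ramp_of_ge hx]; ring
        rw [h1, h2, Hf_eq hx, Hf_eq hx]; ring
    rw [key]
    exact Submodule.sub_mem _
      (Submodule.add_mem _ (ih htail c) (Hf_mem _ _ _)) (Hf_mem _ _ _)

lemma Fc_smul_list (a : ℝ) : ∀ (l : List (ℝ × ℝ)) (c x : ℝ),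
    a * Fc c l x = Fc (a * c) (l.map fun p => (a * p.1, p.2)) x := by
  intro l
  induction l with
  | nil => intro c x; simp [Fc]
  | cons p t ih =>
    intro c x
    rw [List.map_cons, Fc_cons, Fc_cons, mul_add, ih]; ring

lemma exists_Fc {φ : ℝ → ℝ} (h : φ ∈ PLspan) : ∃ c l, φ = Fc c l := by
  induction h using Submodule.span_induction with
  | mem x hx =>
    rcases hx with hx | ⟨k, rfl⟩
    · rw [Set.mem_singleton_iff] at hx; subst hx
      exact ⟨1, [], funext fun x => by simp [Fc]⟩
    · exact ⟨0, [(1, k)], funext fun x => by simp [Fc]⟩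
  | zero => exact ⟨0, [], funext fun x => by simp [Fc]⟩
  | add x y hx hy ihx ihy =>
    obtain ⟨c, l, rfl⟩ := ihx; obtain ⟨d, m, rfl⟩ := ihy
    refine ⟨c + d, l ++ m, funext fun x => ?_⟩
    show Fc c l x + Fc d m x = _
    simp only [Fc, List.map_append, List.sum_append]
    ring
  | smul a x hx ihx =>
    obtain ⟨c, l, rfl⟩ := ihx
    refine ⟨a * c, l.map fun p => (a * p.1, p.2), funext fun x => ?_⟩
    show a * Fc c l x = _
    exact Fc_smul_list a l c x

lemma posPart_mem {φ : ℝ → ℝ} (h : φ ∈ PLspan) : (fun x => max (φ x) 0) ∈ PLspan := by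
  obtain ⟨c, l, rfl⟩ := exists_Fc h
  have hperm : (l.mergeSort fun p q => decide (q.2 ≤ p.2)).Perm l :=
    List.mergeSort_perm l _
  have heq : Fc c l = Fc c (l.mergeSort fun p q => decide (q.2 ≤ p.2)) := by
    funext x; simp only [Fc]
    congr 1
    exact ((hperm.map _).sum_eq).symm
  rw [heq]
  apply posPart_Fc_mem
  have hs := List.pairwise_mergeSort (le := fun p q : ℝ × ℝ => decide (q.2 ≤ p.2))
    (fun a b c h1 h2 => by
      simp only [decide_eq_true_eq] at *
      exact le_trans h2 h1)
    (fun a b => by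
      simp only [Bool.or_eq_true, decide_eq_true_eq]
      exact le_total b.2 a.2) l
  exact hs.imp fun h => of_decide_eq_true h

lemma absFun_mem {φ : ℝ → ℝ} (h : φ ∈ PLspan) : (fun x => |φ x|) ∈ PLspan := by
  have habs : (fun x => |φ x|) = (2 : ℝ) • (fun x => max (φ x) 0) - φ := by
    funext x
    show |φ x| = 2 * max (φ x) 0 - φ x
    rcases le_total (φ x) 0 with h1 | h1
    · rw [abs_of_nonpos h1, max_eq_right h1]; ring
    · rw [abs_of_nonneg h1, max_eq_left h1]; ring
  rw [habs]
  exact Submodule.sub_mem _ (Submodule.smul_mem _ _ (posPart_mem h)) h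


section Transfer

universe v
variable {Ω : Type v} {m0 : MeasurableSpace Ω} {μ : MeasureTheory.Measure Ω}

open scoped Classical in
/-- Composition of an a.e. function with a real function, `0` if not continuous. -/
def Phi (f : Ω →ₘ[μ] ℝ) (φ : ℝ → ℝ) : Ω →ₘ[μ] ℝ :=
  if h : Continuous φ then
    AEEqFun.mk (fun ω => φ (f ω)) (h.comp_aestronglyMeasurable f.aestronglyMeasurable)
  else 0

lemma Phi_coeFn (f : Ω →ₘ[μ] ℝ) {φ : ℝ → ℝ} (h : Continuous φ) :
    ⇑(Phi f φ) =ᵐ[μ] fun ω => φ (f ω) := by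
  classical
  rw [Phi, dif_pos h]; exact AEEqFun.coeFn_mk _ _

lemma Phi_add (f : Ω →ₘ[μ] ℝ) {φ ψ : ℝ → ℝ} (hφ : Continuous φ) (hψ : Continuous ψ) :
    Phi f (φ + ψ) = Phi f φ + Phi f ψ := by
  apply AEEqFun.ext
  filter_upwards [Phi_coeFn f (φ := φ + ψ) (hφ.add hψ), Phi_coeFn f hφ, Phi_coeFn f hψ,
    AEEqFun.coeFn_add (Phi f φ) (Phi f ψ)] with ω h1 h2 h3 h4
  simp only [h1, h4, Pi.add_apply, h2, h3]

lemma Phi_smul (f : Ω →ₘ[μ] ℝ) (a : ℝ) {φ : ℝ → ℝ} (hφ : Continuous φ) :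
    Phi f (a • φ) = a • Phi f φ := by
  apply AEEqFun.ext
  filter_upwards [Phi_coeFn f (φ := a • φ) (hφ.const_smul a), Phi_coeFn f hφ,
    AEEqFun.coeFn_smul a (Phi f φ)] with ω h1 h2 h3
  simp only [h1, h3, Pi.smul_apply, h2]

lemma Phi_zero (f : Ω →ₘ[μ] ℝ) : Phi f (0 : ℝ → ℝ) = 0 := by
  apply AEEqFun.ext
  filter_upwards [Phi_coeFn f (φ := (0 : ℝ → ℝ)) continuous_const,
    AEEqFun.coeFn_zero (β := ℝ) (μ := μ)] with ω h1 h2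
  simp only [h1, h2, Pi.zero_apply]

lemma Phi_one (f : Ω →ₘ[μ] ℝ) : Phi f (fun _ => (1 : ℝ)) = 1 := by
  apply AEEqFun.ext
  filter_upwards [Phi_coeFn f (continuous_const : Continuous fun _ : ℝ => (1 : ℝ)),
    AEEqFun.coeFn_one (β := ℝ) (μ := μ)] with ω h1 h2
  rw [h1, h2]; rfl

lemma continuous_ramp (k : ℝ) : Continuous (ramp k) :=
  (continuous_id.sub continuous_const).max continuous_const

lemma Phi_ramp (f : Ω →ₘ[μ] ℝ) (k : ℝ) :
    Phi f (ramp k) = (f - k • (1 : Ω →ₘ[μ] ℝ)) ⊔ 0 := by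
  apply AEEqFun.ext
  filter_upwards [Phi_coeFn f (continuous_ramp k),
    AEEqFun.coeFn_sup (f - k • (1 : Ω →ₘ[μ] ℝ)) 0,
    AEEqFun.coeFn_sub f (k • (1 : Ω →ₘ[μ] ℝ)),
    AEEqFun.coeFn_smul k (1 : Ω →ₘ[μ] ℝ),
    AEEqFun.coeFn_one (β := ℝ) (μ := μ),
    AEEqFun.coeFn_zero (β := ℝ) (μ := μ)] with ω h1 h2 h3 h4 h5 h6
  simp only [h1, h2, h3, h4, h6, Pi.sub_apply, Pi.smul_apply, h5, Pi.one_apply,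
    Pi.zero_apply, smul_eq_mul, mul_one]
  simp [ramp]

end Transfer

end OptionSpaceAux


/-- For a nonnegative `f` in an ideal `X` of `L⁰` containing the constants,
the option space `O_f` is a sublattice of `X` and coincides with
`span{f + 1, f, (f − k(f+1))⁺ : k ∈ ℝ}`. -/
theorem optionSpace_sublattice
    {m0 : MeasurableSpace Ω} {μ : Measure Ω} [IsProbabilityMeasure μ]
    (X : Submodule ℝ (Ω →ₘ[μ] ℝ)) (hX : IsIdealL0 X)
    (hconst : ∀ c : ℝ, AEEqFun.const Ω (β := ℝ) c ∈ X)
    (f : Ω →ₘ[μ] ℝ) (hfX : f ∈ X) (hf : 0 ≤ f) :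
    ((optionSpace f : Set (Ω →ₘ[μ] ℝ)) ⊆ X) ∧
    (∀ g ∈ optionSpace f, |g| ∈ optionSpace f) ∧
    optionSpace f = Submodule.span ℝ
      ({f + 1, f} ∪ {g | ∃ k : ℝ, g = (f - k • (f + 1)) ⊔ 0}) := by
  classical
  have h1const : (1 : Ω →ₘ[μ] ℝ) = AEEqFun.const Ω (1 : ℝ) := rfl
  have h1X : (1 : Ω →ₘ[μ] ℝ) ∈ X := by rw [h1const]; exact hconst 1
  have hf0 : ∀ᵐ ω ∂μ, 0 ≤ f ω := by
    have h := AEEqFun.coeFn_le.2 hf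
    filter_upwards [h, AEEqFun.coeFn_zero (β := ℝ) (μ := μ)] with ω h1 h2
    rw [h2] at h1
    simpa using h1
  -- part 1
  have callmem : ∀ k : ℝ, ((f - k • (1 : Ω →ₘ[μ] ℝ)) ⊔ 0) ∈ X := by
    intro k
    have hyX : f + |k| • (1 : Ω →ₘ[μ] ℝ) ∈ X :=
      Submodule.add_mem _ hfX (Submodule.smul_mem _ _ h1X)
    refine hX _ _ ?_ hyX
    rw [← AEEqFun.coeFn_le]
    filter_upwards [hf0,
      AEEqFun.coeFn_abs ((f - k • (1 : Ω →ₘ[μ] ℝ)) ⊔ 0),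
      AEEqFun.coeFn_abs (f + |k| • (1 : Ω →ₘ[μ] ℝ)),
      AEEqFun.coeFn_sup (f - k • (1 : Ω →ₘ[μ] ℝ)) 0,
      AEEqFun.coeFn_sub f (k • (1 : Ω →ₘ[μ] ℝ)),
      AEEqFun.coeFn_smul k (1 : Ω →ₘ[μ] ℝ),
      AEEqFun.coeFn_smul |k| (1 : Ω →ₘ[μ] ℝ),
      AEEqFun.coeFn_add f (|k| • (1 : Ω →ₘ[μ] ℝ)),
      AEEqFun.coeFn_one (β := ℝ) (μ := μ),
      AEEqFun.coeFn_zero (β := ℝ) (μ := μ)] with ω h0 h1 h2 h3 h4 h5 h6 h7 h8 h9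
    simp only [h1, h2, h3, h4, h5, h6, h7, h9, Pi.sub_apply, Pi.add_apply,
      Pi.smul_apply, h8, Pi.one_apply, Pi.zero_apply, smul_eq_mul, mul_one]
    have e1 : (0 : ℝ) ≤ f ω + |k| := by linarith [abs_nonneg k]
    rw [abs_of_nonneg (le_max_right _ _), abs_of_nonneg e1]
    exact max_le (by linarith [neg_abs_le k]) e1
  have part1 : (optionSpace f : Set (Ω →ₘ[μ] ℝ)) ⊆ X := by
    intro g hg
    simp only [SetLike.mem_coe] at hg ⊢
    induction hg using Submodule.span_induction with
    | mem x hx =>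
      rcases hx with hx | ⟨k, rfl⟩
      · rw [Set.mem_singleton_iff] at hx; subst hx; exact h1X
      · exact callmem k
    | zero => exact X.zero_mem
    | add x y hx hy ihx ihy => exact X.add_mem ihx ihy
    | smul a x hx ihx => exact X.smul_mem a ihx
  -- representation of elements of the option space
  have hrepr : ∀ g ∈ optionSpace f, ∃ φ ∈ PLspan, g = Phi f φ := by
    intro g hg
    induction hg using Submodule.span_induction with
    | mem x hx =>
      rcases hx with hx | ⟨k, rfl⟩
      · rw [Set.mem_singleton_iff] at hx; subst hx
        exact ⟨fun _ => 1, one_mem_PLspan, (Phi_one f).symm⟩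
      · exact ⟨ramp k, ramp_mem k, (Phi_ramp f k).symm⟩
    | zero => exact ⟨0, Submodule.zero_mem _, (Phi_zero f).symm⟩
    | add x y hx hy ihx ihy =>
      obtain ⟨φ, hφ, rfl⟩ := ihx; obtain ⟨ψ, hψ, rfl⟩ := ihy
      exact ⟨φ + ψ, Submodule.add_mem _ hφ hψ,
        (Phi_add f (PLspan_continuous hφ) (PLspan_continuous hψ)).symm⟩
    | smul a x hx ihx =>
      obtain ⟨φ, hφ, rfl⟩ := ihx
      exact ⟨a • φ, Submodule.smul_mem _ _ hφ, (Phi_smul f a (PLspan_continuous hφ)).symm⟩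
  have hmemO : ∀ φ ∈ PLspan, Phi f φ ∈ optionSpace f := by
    intro φ hφ
    induction hφ using Submodule.span_induction with
    | mem x hx =>
      rcases hx with hx | ⟨k, rfl⟩
      · rw [Set.mem_singleton_iff] at hx; subst hx
        rw [Phi_one]; exact Submodule.subset_span (Or.inl rfl)
      · rw [Phi_ramp]; exact Submodule.subset_span (Or.inr ⟨k, rfl⟩)
    | zero => rw [Phi_zero]; exact Submodule.zero_mem _
    | add x y hx hy ihx ihy =>
      rw [Phi_add f (PLspan_continuous hx) (PLspan_continuous hy)]
      exact Submodule.add_mem _ ihx ihy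
    | smul a x hx ihx =>
      rw [Phi_smul f a (PLspan_continuous hx)]
      exact Submodule.smul_mem _ _ ihx
  -- part 2
  have part2 : ∀ g ∈ optionSpace f, |g| ∈ optionSpace f := by
    intro g hg
    obtain ⟨φ, hφ, rfl⟩ := hrepr g hg
    have hc := PLspan_continuous hφ
    have habs : |Phi f φ| = Phi f fun x => |φ x| := by
      apply AEEqFun.ext
      filter_upwards [AEEqFun.coeFn_abs (Phi f φ), Phi_coeFn f hc,
        Phi_coeFn f (φ := fun x => |φ x|) hc.abs] with ω h1 h2 h3
      rw [h1, h2, h3]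
    rw [habs]
    exact hmemO _ (absFun_mem hφ)
  -- part 3
  have hf1Y : f + 1 ∈ Submodule.span ℝ
      ({f + 1, f} ∪ {g | ∃ k : ℝ, g = (f - k • (f + 1)) ⊔ 0}) :=
    Submodule.subset_span (Or.inl (Set.mem_insert _ _))
  have hfY : f ∈ Submodule.span ℝ
      ({f + 1, f} ∪ {g | ∃ k : ℝ, g = (f - k • (f + 1)) ⊔ 0}) :=
    Submodule.subset_span (Or.inl (Set.mem_insert_of_mem _ rfl))
  have h1Y : (1 : Ω →ₘ[μ] ℝ) ∈ Submodule.span ℝ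
      ({f + 1, f} ∪ {g | ∃ k : ℝ, g = (f - k • (f + 1)) ⊔ 0}) := by
    have e1 := Submodule.sub_mem _ hf1Y hfY
    rwa [add_sub_cancel_left] at e1
  have h1O : (1 : Ω →ₘ[μ] ℝ) ∈ optionSpace f := Submodule.subset_span (Or.inl rfl)
  have hfO : f ∈ optionSpace f := by
    have e1 : f = (f - (0 : ℝ) • (1 : Ω →ₘ[μ] ℝ)) ⊔ 0 := by
      rw [zero_smul, sub_zero, sup_eq_left.2 hf]
    exact Submodule.subset_span (Or.inr ⟨0, e1⟩)
  have part3 : optionSpace f = Submodule.span ℝ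
      ({f + 1, f} ∪ {g | ∃ k : ℝ, g = (f - k • (f + 1)) ⊔ 0}) := by
    apply le_antisymm
    · rw [optionSpace, Submodule.span_le]
      rintro g (hg | ⟨k, rfl⟩)
      · rw [Set.mem_singleton_iff] at hg; subst hg
        exact h1Y
      · rcases le_or_gt k (-1) with hk | hk
        · have hpos : 0 ≤ f - k • (1 : Ω →ₘ[μ] ℝ) := by
            rw [← AEEqFun.coeFn_le]
            filter_upwards [hf0, AEEqFun.coeFn_sub f (k • (1 : Ω →ₘ[μ] ℝ)),
              AEEqFun.coeFn_smul k (1 : Ω →ₘ[μ] ℝ),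
              AEEqFun.coeFn_one (β := ℝ) (μ := μ),
              AEEqFun.coeFn_zero (β := ℝ) (μ := μ)] with ω h0 h1 h2 h3 h4
            simp only [h1, h2, h4, Pi.sub_apply, Pi.smul_apply, h3, Pi.one_apply,
              Pi.zero_apply, smul_eq_mul, mul_one]
            linarith
          rw [SetLike.mem_coe, sup_eq_left.2 hpos]
          have e1 := Submodule.sub_mem _ hfY (Submodule.sub_mem _
            (Submodule.smul_mem _ k hf1Y) (Submodule.smul_mem _ k hfY))
          rwa [← smul_sub, add_sub_cancel_left] at e1
        · have hk1 : 0 < 1 + k := by linarith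
          have heq : (f - k • (1 : Ω →ₘ[μ] ℝ)) ⊔ 0
              = (1 + k) • ((f - (k / (1 + k)) • (f + 1)) ⊔ 0) := by
            apply AEEqFun.ext
            filter_upwards [AEEqFun.coeFn_sup (f - k • (1 : Ω →ₘ[μ] ℝ)) 0,
              AEEqFun.coeFn_sub f (k • (1 : Ω →ₘ[μ] ℝ)),
              AEEqFun.coeFn_smul k (1 : Ω →ₘ[μ] ℝ),
              AEEqFun.coeFn_one (β := ℝ) (μ := μ),
              AEEqFun.coeFn_zero (β := ℝ) (μ := μ),
              AEEqFun.coeFn_smul (1 + k) ((f - (k / (1 + k)) • (f + 1)) ⊔ 0),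
              AEEqFun.coeFn_sup (f - (k / (1 + k)) • (f + 1)) 0,
              AEEqFun.coeFn_sub f ((k / (1 + k)) • (f + 1)),
              AEEqFun.coeFn_smul (k / (1 + k)) (f + 1),
              AEEqFun.coeFn_add f (1 : Ω →ₘ[μ] ℝ)] with ω h1 h2 h3 h4 h5 h6 h7 h8 h9 h10
            simp only [h1, h2, h3, h4, h5, h6, h7, h8, h9, h10, Pi.sub_apply,
              Pi.add_apply, Pi.smul_apply, Pi.one_apply, Pi.zero_apply, smul_eq_mul,
              mul_one]
            rw [mul_max_of_nonneg _ _ hk1.le, mul_zero]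
            congr 1
            field_simp
            ring
          rw [SetLike.mem_coe, heq]
          exact Submodule.smul_mem _ _
            (Submodule.subset_span (Or.inr ⟨k / (1 + k), rfl⟩))
    · rw [Submodule.span_le]
      rintro g ((rfl | rfl) | ⟨k, rfl⟩)
      · exact Submodule.add_mem _ hfO h1O
      · exact hfO
      · rcases le_or_gt 1 k with hk | hk
        · have hneg : f - k • (f + 1) ≤ 0 := by
            rw [← AEEqFun.coeFn_le]
            filter_upwards [hf0, AEEqFun.coeFn_sub f (k • (f + 1)),
              AEEqFun.coeFn_smul k (f + 1), AEEqFun.coeFn_add f (1 : Ω →ₘ[μ] ℝ),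
              AEEqFun.coeFn_one (β := ℝ) (μ := μ),
              AEEqFun.coeFn_zero (β := ℝ) (μ := μ)] with ω h0 h1 h2 h3 h4 h5
            simp only [h1, h2, h3, h5, Pi.sub_apply, Pi.smul_apply, Pi.add_apply,
              h4, Pi.one_apply, Pi.zero_apply, smul_eq_mul]
            nlinarith
          rw [SetLike.mem_coe, sup_eq_right.2 hneg]
          exact Submodule.zero_mem _
        · have hk1 : 0 < 1 - k := by linarith
          have heq : (f - k • (f + 1)) ⊔ 0
              = (1 - k) • ((f - (k / (1 - k)) • (1 : Ω →ₘ[μ] ℝ)) ⊔ 0) := by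
            apply AEEqFun.ext
            filter_upwards [AEEqFun.coeFn_sup (f - k • (f + 1)) 0,
              AEEqFun.coeFn_sub f (k • (f + 1)),
              AEEqFun.coeFn_smul k (f + 1),
              AEEqFun.coeFn_add f (1 : Ω →ₘ[μ] ℝ),
              AEEqFun.coeFn_one (β := ℝ) (μ := μ),
              AEEqFun.coeFn_zero (β := ℝ) (μ := μ),
              AEEqFun.coeFn_smul (1 - k) ((f - (k / (1 - k)) • (1 : Ω →ₘ[μ] ℝ)) ⊔ 0),
              AEEqFun.coeFn_sup (f - (k / (1 - k)) • (1 : Ω →ₘ[μ] ℝ)) 0,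
              AEEqFun.coeFn_sub f ((k / (1 - k)) • (1 : Ω →ₘ[μ] ℝ)),
              AEEqFun.coeFn_smul (k / (1 - k)) (1 : Ω →ₘ[μ] ℝ)] with ω h1 h2 h3 h4 h5 h6 h7 h8 h9 h10
            simp only [h1, h2, h3, h4, h5, h6, h7, h8, h9, h10, Pi.sub_apply,
              Pi.add_apply, Pi.smul_apply, Pi.one_apply, Pi.zero_apply, smul_eq_mul,
              mul_one]
            rw [mul_max_of_nonneg _ _ hk1.le, mul_zero]
            congr 1
            field_simp
            ring
          rw [SetLike.mem_coe, heq]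
          exact Submodule.smul_mem _ _
            (Submodule.subset_span (Or.inr ⟨k / (1 - k), rfl⟩))
  exact ⟨part1, part2, part3⟩
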